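/- Let f(θ, θ'; G, H, q) = [G + sqrt(G²+q²)] θ + sqrt(2H(G + sqrt(G²+q²))) θ' be the LQR feedback law. Given two parameter sets (G_a, H_a, q_a) and (G_b, H_b, q_b) with all values positive and q_a/G_a = q_b/G_b, and ω_a = sqrt(G_a/H_a), ω_b = sqrt(G_b/H_b), then for all θ, θ': f(θ, θ'; G_b, H_b, q_b) = (G_b/G_a) · f(θ, (ω_a/ω_b) θ'; G_a, H_a, q_a). -/

import Mathlib

theorem lqr_transfer_between_similar_pendulums
    (f : ℝ → ℝ → ℝ → ℝ → ℝ → ℝ)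
    (hf : ∀ θ θ' G H q, f θ θ' G H q = (G + Real.sqrt (G ^ 2 + q ^ 2)) * θ +
        Real.sqrt (2 * H * (G + Real.sqrt (G ^ 2 + q ^ 2))) * θ')
    (Ga Ha qa Gb Hb qb : ℝ)
    (hGa : 0 < Ga) (hHa : 0 < Ha) (hqa : 0 < qa)
    (hGb : 0 < Gb) (hHb : 0 < Hb) (hqb : 0 < qb)
    (hsim : qa / Ga = qb / Gb)
    (ωa ωb : ℝ) (hωa : ωa = Real.sqrt (Ga / Ha)) (hωb : ωb = Real.sqrt (Gb / Hb)) :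
    ∀ θ θ', f θ θ' Gb Hb qb = (Gb / Ga) * f θ ((ωa / ωb) * θ') Ga Ha qa := by
  intro θ θ'
  set c : ℝ := Gb / Ga with hc
  have hc0 : 0 < c := div_pos hGb hGa
  have hGbc : Gb = c * Ga := by rw [hc, div_mul_cancel₀ _ hGa.ne']
  have hqbc : qb = c * qa := by
    rw [hc, div_mul_eq_mul_div, eq_div_iff hGa.ne']
    field_simp at hsim
    linarith [hsim]
  set Sa : ℝ := Ga + Real.sqrt (Ga ^ 2 + qa ^ 2) with hSa
  have hSa0 : 0 < Sa := by
    have := Real.sqrt_nonneg (Ga ^ 2 + qa ^ 2)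
    positivity
  have hsqrt : Real.sqrt (Gb ^ 2 + qb ^ 2) = c * Real.sqrt (Ga ^ 2 + qa ^ 2) := by
    rw [hGbc, hqbc, show (c * Ga) ^ 2 + (c * qa) ^ 2 = c ^ 2 * (Ga ^ 2 + qa ^ 2) by ring,
      Real.sqrt_mul (by positivity), Real.sqrt_sq hc0.le]
  have hSb : Gb + Real.sqrt (Gb ^ 2 + qb ^ 2) = c * Sa := by
    rw [hsqrt, hSa, hGbc]; ring
  have hvel : Real.sqrt (2 * Hb * (c * Sa)) = c * Real.sqrt (2 * Ha * Sa) * (ωa / ωb) := by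
    rw [hωa, hωb, ← Real.sqrt_div (by positivity : (0:ℝ) ≤ Ga / Ha)]
    rw [show c = Real.sqrt (c ^ 2) by rw [Real.sqrt_sq hc0.le]]
    rw [← Real.sqrt_mul (by positivity), ← Real.sqrt_mul (by positivity)]
    congr 1
    rw [Real.sqrt_sq hc0.le, hc]
    field_simp
  rw [hf, hf, hSb, hvel]
  ring
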